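/- Let g(n) = (nC − γ)/√(nV) with C, V > 0 and γ fixed, and F(n) = 1 − Q(g(n)), f(n) = F'(n). If Δn = O(√n) then as n → ∞: 1 − F(n + Δn) = (1 − F(n))·exp{−Δn·g(n)·g'(n)}·(1 + o(1)). -/

import Mathlib

open Filter Asymptotics MeasureTheory

/-- The Gaussian Q-function: complementary CDF of the standard normal. -/
noncomputable def gaussQ (x : ℝ) : ℝ :=
  (Real.sqrt (2 * Real.pi))⁻¹ * ∫ t in Set.Ici x, Real.exp (-(t ^ 2) / 2)

open Set

section Aux


lemma tendsto_sq_half : Tendsto (fun t : ℝ => -(t^2)/2) atTop atBot := by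
  have : Tendsto (fun t : ℝ => t^2/2) atTop atTop :=
    (tendsto_pow_atTop (by norm_num)).atTop_div_const (by norm_num)
  simpa [neg_div] using tendsto_neg_atBot_iff.mpr this

lemma tendstoA : Tendsto (fun t : ℝ => -Real.exp (-(t^2)/2)) atTop (nhds 0) := by
  rw [show (0:ℝ) = -0 by ring]
  exact (Real.tendsto_exp_atBot.comp tendsto_sq_half).neg

lemma hasDerivA (t : ℝ) : HasDerivAt (fun t : ℝ => -Real.exp (-(t^2)/2))
    (t * Real.exp (-(t^2)/2)) t := by
  have h1 : HasDerivAt (fun t : ℝ => -(t^2)/2) (-t) t := by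
    have := ((hasDerivAt_pow 2 t).neg.div_const 2)
    exact this.congr_deriv (by norm_num; ring)
  have := (h1.exp).neg
  exact this.congr_deriv (by ring)

lemma intA {x : ℝ} (hx : 0 < x) :
    ∫ t in Ioi x, t * Real.exp (-(t^2)/2) = Real.exp (-(x^2)/2) := by
  have := integral_Ioi_of_hasDerivAt_of_nonneg' (g := fun t : ℝ => -Real.exp (-(t^2)/2))
    (g' := fun t => t * Real.exp (-(t^2)/2)) (a := x) (l := 0)
    (fun t _ => hasDerivA t) (fun t ht => by
      have : (0:ℝ) < t := hx.trans ht
      positivity) tendstoA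
  rw [this]; ring

lemma intA_integrable {x : ℝ} (hx : 0 < x) :
    IntegrableOn (fun t => t * Real.exp (-(t^2)/2)) (Ioi x) :=
  integrableOn_Ioi_deriv_of_nonneg' (fun t _ => hasDerivA t)
    (fun t ht => by have : (0:ℝ) < t := hx.trans ht; positivity) tendstoA

lemma hasDerivB {t : ℝ} (ht : t ≠ 0) : HasDerivAt (fun t : ℝ => -Real.exp (-(t^2)/2) / t)
    ((1 + (t^2)⁻¹) * Real.exp (-(t^2)/2)) t := by
  have := (hasDerivA t).div (hasDerivAt_id t) ht
  exact this.congr_deriv (by simp only [id]; field_simp; ring)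

lemma tendstoB : Tendsto (fun t : ℝ => -Real.exp (-(t^2)/2) / t) atTop (nhds 0) := by
  rw [show (0:ℝ) = 0 * 0 by ring]
  exact Tendsto.mul tendstoA tendsto_inv_atTop_zero |>.congr (fun t => (div_eq_mul_inv _ _).symm)

lemma intB {x : ℝ} (hx : 0 < x) :
    ∫ t in Ioi x, (1 + (t^2)⁻¹) * Real.exp (-(t^2)/2) = Real.exp (-(x^2)/2) / x := by
  have := integral_Ioi_of_hasDerivAt_of_nonneg' (g := fun t : ℝ => -Real.exp (-(t^2)/2) / t)
    (g' := fun t => (1 + (t^2)⁻¹) * Real.exp (-(t^2)/2)) (a := x) (l := 0)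
    (fun t ht => hasDerivB (hx.trans_le ht).ne') (fun t ht => by
      have : (0:ℝ) < t := hx.trans ht
      positivity) tendstoB
  rw [this]; ring

lemma exp_integrableOn (x : ℝ) :
    IntegrableOn (fun t : ℝ => Real.exp (-(t^2)/2)) (Ioi x) := by
  have : Integrable (fun t : ℝ => Real.exp (-(1/2) * t^2)) := integrable_exp_neg_mul_sq (by norm_num)
  exact (this.congr (by apply Filter.Eventually.of_forall; intro t; ring_nf)).integrableOn

lemma mills_upper {x : ℝ} (hx : 0 < x) :
    ∫ t in Ioi x, Real.exp (-(t^2)/2) ≤ Real.exp (-(x^2)/2) / x := by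
  have h : ∫ t in Ioi x, Real.exp (-(t^2)/2) ≤ ∫ t in Ioi x, (t/x) * Real.exp (-(t^2)/2) := by
    apply setIntegral_mono_on (exp_integrableOn x)
      ((intA_integrable hx).div_const x |>.congr ?_) measurableSet_Ioi ?_
    · exact Filter.Eventually.of_forall fun t => by ring
    · intro t ht
      have h1 : (0:ℝ) < t := hx.trans ht
      have : (1:ℝ) ≤ t / x := (one_le_div hx).mpr ht.le
      nlinarith [Real.exp_pos (-(t^2)/2)]
  calc _ ≤ _ := h
    _ = (∫ t in Ioi x, t * Real.exp (-(t^2)/2)) / x := by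
        rw [← integral_div]; congr 1; ext t; ring
    _ = _ := by rw [intA hx]

lemma mills_lower {x : ℝ} (hx : 0 < x) :
    Real.exp (-(x^2)/2) * (x / (1 + x^2)) ≤ ∫ t in Ioi x, Real.exp (-(t^2)/2) := by
  have h : ∫ t in Ioi x, (1 + (t^2)⁻¹) * Real.exp (-(t^2)/2)
      ≤ ∫ t in Ioi x, (1 + (x^2)⁻¹) * Real.exp (-(t^2)/2) := by
    apply setIntegral_mono_on ?_ ((exp_integrableOn x).const_mul _) measurableSet_Ioi ?_
    · exact integrableOn_Ioi_deriv_of_nonneg' (fun t ht => hasDerivB (hx.trans_le ht).ne')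
        (fun t ht => by have : (0:ℝ) < t := hx.trans ht; positivity) tendstoB
    · intro t ht
      have h1 : (0:ℝ) < t := hx.trans ht
      have h2 : (t^2)⁻¹ ≤ (x^2)⁻¹ := by
        apply inv_anti₀ (by positivity)
        nlinarith [(show x < t from ht).le]
      nlinarith [Real.exp_pos (-(t^2)/2)]
  rw [intB hx, integral_const_mul] at h
  have hx2 : (0:ℝ) < 1 + (x^2)⁻¹ := by positivity
  have key : (Real.exp (-(x^2)/2) / x) / (1 + (x^2)⁻¹) ≤ ∫ t in Ioi x, Real.exp (-(t^2)/2) :=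
    (div_le_iff₀' hx2).mpr h
  calc Real.exp (-(x^2)/2) * (x / (1 + x^2))
      = (Real.exp (-(x^2)/2) / x) / (1 + (x^2)⁻¹) := by
        field_simp
        ring
    _ ≤ _ := key


lemma sqrt_tendsto_atTop : Tendsto Real.sqrt atTop atTop := by
  apply tendsto_atTop_atTop.mpr
  intro b
  refine ⟨b^2, fun n hn => ?_⟩
  calc b ≤ |b| := le_abs_self b
    _ = Real.sqrt (b^2) := (Real.sqrt_sq_eq_abs b).symm
    _ ≤ Real.sqrt n := Real.sqrt_le_sqrt hn

lemma gderiv {C V γ : ℝ} (hV : 0 < V) (g : ℝ → ℝ)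
    (hg : ∀ n : ℝ, g n = (n * C - γ) / Real.sqrt (n * V)) {n : ℝ} (hn : 0 < n) :
    deriv g n = (C * Real.sqrt (n*V) - (n*C - γ) * (1/(2*Real.sqrt (n*V)) * V))
      / (Real.sqrt (n*V))^2 := by
  have hg' : g = fun n => (n*C - γ) / Real.sqrt (n*V) := funext hg
  rw [hg']
  have hnV : 0 < n * V := mul_pos hn hV
  have h1 : HasDerivAt (fun x : ℝ => x*V) V n := hasDerivAt_mul_const V
  have h2 : HasDerivAt (fun x : ℝ => Real.sqrt (x*V)) (1/(2*Real.sqrt (n*V)) * V) n :=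
    (Real.hasDerivAt_sqrt hnV.ne').comp n h1
  have h3 : HasDerivAt (fun x : ℝ => x*C - γ) C n := (hasDerivAt_mul_const C).sub_const γ
  exact (h3.div h2 (Real.sqrt_ne_zero'.mpr hnV)).deriv

lemma gg' {C V γ : ℝ} (hV : 0 < V) (g : ℝ → ℝ)
    (hg : ∀ n : ℝ, g n = (n * C - γ) / Real.sqrt (n * V)) {n : ℝ} (hn : 0 < n) :
    g n * deriv g n = (n^2*C^2 - γ^2) / (2*n^2*V) := by
  rw [gderiv hV g hg hn, hg]
  have hnV : 0 < n * V := mul_pos hn hV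
  set s := Real.sqrt (n*V) with hs_def
  have hs0 : 0 < s := Real.sqrt_pos.mpr hnV
  have hs2 : s^2 = n*V := Real.sq_sqrt hnV.le
  have hVeq : V = s^2/n := by rw [hs2]; field_simp
  rw [hVeq]
  field_simp
  ring

end Aux

set_option maxHeartbeats 1000000

/-- Gaussian tail under a blocklength perturbation: with `g(n) = (nC - γ)/√(nV)`,
`F(n) = 1 - Q(g(n))`, and `Δn = O(√n)`, one has
`1 - F(n + Δn) = (1 - F(n))·exp{-Δn·g(n)·g'(n)}·(1 + o(1))` as `n → ∞`. -/
theorem tail_perturbation (C V γ : ℝ) (hC : 0 < C) (hV : 0 < V)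
    (g F : ℝ → ℝ)
    (hg : ∀ n : ℝ, g n = (n * C - γ) / Real.sqrt (n * V))
    (hF : ∀ n : ℝ, F n = 1 - gaussQ (g n))
    (Δ : ℝ → ℝ)
    (hΔ : Δ =O[atTop] fun n => Real.sqrt n) :
    Filter.Tendsto
      (fun n => (1 - F (n + Δ n)) /
        ((1 - F n) * Real.exp (-(Δ n * g n * deriv g n))))
      Filter.atTop (nhds 1) := by
  -- extract the big-O constant
  rw [isBigO_iff] at hΔ
  obtain ⟨c, hc⟩ := hΔ
  set K := max c 1 with hK_def
  have hK1 : (1:ℝ) ≤ K := le_max_right c 1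
  have hK0 : (0:ℝ) < K := lt_of_lt_of_le one_pos hK1
  -- the bundle of eventual facts
  have hEv : ∀ᶠ n in atTop, (1 ≤ n ∧ |Δ n| ≤ K * Real.sqrt n) ∧
      (n/2 ≤ n + Δ n ∧ 0 < n*C - γ ∧ 0 < (n + Δ n)*C - γ ∧ 2*(|γ|+1) ≤ n*C) := by
    filter_upwards [hc, eventually_ge_atTop (1:ℝ), eventually_ge_atTop (4*K^2),
      eventually_ge_atTop (2*(|γ|+1)/C)] with n hcn h1 h4K hγC
    have hn0 : (0:ℝ) < n := lt_of_lt_of_le one_pos h1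
    have hsq : Real.sqrt n * Real.sqrt n = n := Real.mul_self_sqrt hn0.le
    have hsqnn : 0 ≤ Real.sqrt n := Real.sqrt_nonneg n
    have habs : (0:ℝ) ≤ |γ| := abs_nonneg γ
    have hγ1 : γ ≤ |γ| := le_abs_self γ
    have hΔb : |Δ n| ≤ K * Real.sqrt n := by
      have h : ‖Δ n‖ ≤ c * ‖Real.sqrt n‖ := hcn
      rw [Real.norm_eq_abs, Real.norm_eq_abs, abs_of_nonneg hsqnn] at h
      exact h.trans (mul_le_mul_of_nonneg_right (le_max_left c 1) hsqnn)
    have h2K : 2*K ≤ Real.sqrt n := by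
      have h : Real.sqrt (4*K^2) ≤ Real.sqrt n := Real.sqrt_le_sqrt h4K
      have h4 : Real.sqrt (4*K^2) = 2*K := by
        rw [show 4*K^2 = (2*K)^2 by ring, Real.sqrt_sq (by positivity)]
      linarith [h4 ▸ h]
    have hKs : K * Real.sqrt n ≤ n/2 := by nlinarith
    have hΔhalf : n/2 ≤ n + Δ n := by
      have := (abs_le.mp hΔb).1
      linarith
    have hnC : 2*(|γ|+1) ≤ n*C := by
      rw [div_le_iff₀ hC] at hγC
      linarith
    have hb : 0 < n*C - γ := by linarith
    have ha : 0 < (n + Δ n)*C - γ := by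
      have h := mul_le_mul_of_nonneg_right hΔhalf hC.le
      have h2 : n/2*C = n*C/2 := by ring
      linarith [h2 ▸ h]
    exact ⟨⟨h1, hΔb⟩, hΔhalf, hb, ha, hnC⟩
  -- basic tendsto facts
  have hT1 : Tendsto (fun n => n + Δ n) atTop atTop := by
    apply tendsto_atTop_mono' atTop (hEv.mono fun n hn => hn.2.1)
    exact tendsto_id.atTop_div_const two_pos
  have hT2 : Tendsto g atTop atTop := by
    have hbase : Tendsto (fun n => (C/(2*Real.sqrt V)) * Real.sqrt n) atTop atTop :=
      sqrt_tendsto_atTop.const_mul_atTop (by positivity)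
    apply tendsto_atTop_mono' atTop ?_ hbase
    filter_upwards [hEv] with n hn
    obtain ⟨⟨h1, hΔb⟩, hΔhalf, hb, ha, hnC⟩ := hn
    have hn0 : (0:ℝ) < n := lt_of_lt_of_le one_pos h1
    have hsq : Real.sqrt n * Real.sqrt n = n := Real.mul_self_sqrt hn0.le
    have hsV : (0:ℝ) < Real.sqrt V := Real.sqrt_pos.mpr hV
    have hsn : (0:ℝ) < Real.sqrt n := Real.sqrt_pos.mpr hn0
    rw [hg, Real.sqrt_mul hn0.le, le_div_iff₀ (by positivity)]
    have key : C/(2*Real.sqrt V)*Real.sqrt n*(Real.sqrt n*Real.sqrt V) = C*n/2 := by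
      rw [show C/(2*Real.sqrt V)*Real.sqrt n*(Real.sqrt n*Real.sqrt V)
          = C*(Real.sqrt n*Real.sqrt n)*(Real.sqrt V/Real.sqrt V)/2 by ring,
        hsq, div_self hsV.ne']
      ring
    rw [key]
    have hγ1 : γ ≤ |γ| := le_abs_self γ
    have habs : (0:ℝ) ≤ |γ| := abs_nonneg γ
    linarith
  have hTa : Tendsto (fun n => g (n + Δ n)) atTop atTop := hT2.comp hT1
  -- Δ n / n → 0
  have hu : Tendsto (fun n => Δ n / n) atTop (nhds 0) := by
    have hbnd : ∀ᶠ n in atTop, ‖Δ n / n‖ ≤ K * (Real.sqrt n)⁻¹ := by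
      filter_upwards [hEv] with n hn
      obtain ⟨⟨h1, hΔb⟩, _⟩ := hn
      have hn0 : (0:ℝ) < n := lt_of_lt_of_le one_pos h1
      have hsn : (0:ℝ) < Real.sqrt n := Real.sqrt_pos.mpr hn0
      have hsq : Real.sqrt n * Real.sqrt n = n := Real.mul_self_sqrt hn0.le
      rw [Real.norm_eq_abs, abs_div, abs_of_pos hn0, div_le_iff₀ hn0]
      calc |Δ n| ≤ K * Real.sqrt n := hΔb
        _ = K * (Real.sqrt n)⁻¹ * n := by
            field_simp
            linear_combination hsq
    refine squeeze_zero_norm' hbnd ?_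
    have h0 : Tendsto (fun n : ℝ => (Real.sqrt n)⁻¹) atTop (nhds 0) :=
      tendsto_inv_atTop_zero.comp sqrt_tendsto_atTop
    simpa using h0.const_mul K
  have hγn : Tendsto (fun n : ℝ => γ / n) atTop (nhds 0) := by
    simpa [div_eq_mul_inv] using tendsto_inv_atTop_zero.const_mul γ
  -- ratio g n / g (n + Δ n) → 1
  have hT4 : Tendsto (fun n => g n / g (n + Δ n)) atTop (nhds 1) := by
    have hw : Tendsto (fun n => ((C - γ/n) * Real.sqrt (1 + Δ n / n)) /
        (C*(1 + Δ n / n) - γ/n)) atTop (nhds 1) := by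
      have hnum : Tendsto (fun n => (C - γ/n) * Real.sqrt (1 + Δ n / n)) atTop
          (nhds (C * 1)) := by
        apply Tendsto.mul
        · simpa using (tendsto_const_nhds (x := C)).sub hγn
        · have h1 : Tendsto (fun n => 1 + Δ n / n) atTop (nhds 1) := by
            simpa using hu.const_add 1
          have := (Real.continuous_sqrt.tendsto 1).comp h1
          simpa [Function.comp_def] using this
      have hden : Tendsto (fun n => C*(1 + Δ n / n) - γ/n) atTop (nhds (C*1 - 0)) := by
        apply Tendsto.sub _ hγn
        exact (tendsto_const_nhds.mul (by simpa using hu.const_add 1))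
      have := hnum.div hden (by simpa using hC.ne')
      simpa [hC.ne', Pi.div_def] using this
    apply hw.congr'
    filter_upwards [hEv] with n hn
    obtain ⟨⟨h1, hΔb⟩, hΔhalf, hb, ha, hnC⟩ := hn
    have hn0 : (0:ℝ) < n := lt_of_lt_of_le one_pos h1
    have hm0 : (0:ℝ) < n + Δ n := lt_of_lt_of_le (by linarith) hΔhalf
    have hmu : n + Δ n = n * (1 + Δ n / n) := by field_simp
    have h1u : (0:ℝ) < 1 + Δ n / n := by
      have heq : 1 + Δ n / n = (n + Δ n)/n := by field_simp
      rw [heq]; exact div_pos hm0 hn0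
    have hsn : (0:ℝ) < Real.sqrt n := Real.sqrt_pos.mpr hn0
    have hsV : (0:ℝ) < Real.sqrt V := Real.sqrt_pos.mpr hV
    have hsu : (0:ℝ) < Real.sqrt (1 + Δ n / n) := Real.sqrt_pos.mpr h1u
    have hsu2 : Real.sqrt (1 + Δ n / n) * Real.sqrt (1 + Δ n / n) = 1 + Δ n / n :=
      Real.mul_self_sqrt h1u.le
    have hsm : Real.sqrt ((n + Δ n) * V) = Real.sqrt n * Real.sqrt (1 + Δ n / n) * Real.sqrt V := by
      rw [hmu, Real.sqrt_mul (by positivity) V, Real.sqrt_mul hn0.le]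
    have hden2 : C*(1 + Δ n / n) - γ/n = ((n + Δ n)*C - γ)/n := by
      rw [hmu]; field_simp
    rw [hden2, hg, hg, hsm, Real.sqrt_mul hn0.le]
    field_simp
  -- D → 0
  have hT3 : Tendsto (fun n => (g (n + Δ n))^2/2 - (g n)^2/2 - Δ n * g n * deriv g n)
      atTop (nhds 0) := by
    have hbnd : ∀ᶠ n in atTop,
        ‖(g (n + Δ n))^2/2 - (g n)^2/2 - Δ n * g n * deriv g n‖ ≤ (γ^2*K^2/V) * n⁻¹ := by
      filter_upwards [hEv] with n hn
      obtain ⟨⟨h1, hΔb⟩, hΔhalf, hb, ha, hnC⟩ := hn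
      have hn0 : (0:ℝ) < n := lt_of_lt_of_le one_pos h1
      have hm0 : (0:ℝ) < n + Δ n := lt_of_lt_of_le (by linarith) hΔhalf
      have hsq : Real.sqrt n * Real.sqrt n = n := Real.mul_self_sqrt hn0.le
      have ga2 : (g (n + Δ n))^2 = ((n + Δ n)*C - γ)^2/((n + Δ n)*V) := by
        rw [hg, div_pow, Real.sq_sqrt (mul_pos hm0 hV).le]
      have gb2 : (g n)^2 = (n*C - γ)^2/(n*V) := by
        rw [hg, div_pow, Real.sq_sqrt (mul_pos hn0 hV).le]
      have hDeq : (g (n + Δ n))^2/2 - (g n)^2/2 - Δ n * g n * deriv g n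
          = γ^2*(Δ n)^2/(2*V*n^2*(n + Δ n)) := by
        rw [ga2, gb2, mul_assoc, gg' hV g hg hn0]
        field_simp
        ring
      rw [hDeq, Real.norm_eq_abs, abs_of_nonneg (by positivity)]
      have hΔsq : (Δ n)^2 ≤ K^2*n := by
        nlinarith [sq_abs (Δ n), abs_nonneg (Δ n), Real.sqrt_nonneg n, hK0.le]
      have key : γ^2*(Δ n)^2/(2*V*n^2*(n + Δ n)) ≤ (γ^2*(K^2*n))/(V*n^3) := by
        apply div_le_div₀ (by positivity)
          (mul_le_mul_of_nonneg_left hΔsq (sq_nonneg γ)) (by positivity)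
        have hd := mul_le_mul_of_nonneg_left hΔhalf (by positivity : (0:ℝ) ≤ 2*V*n^2)
        calc V*n^3 = 2*V*n^2*(n/2) := by ring
          _ ≤ 2*V*n^2*(n + Δ n) := hd
      have keq : (γ^2*(K^2*n))/(V*n^3) = (γ^2*K^2/V) * (n^2)⁻¹ := by
        field_simp
      have k2 : (γ^2*K^2/V) * (n^2)⁻¹ ≤ (γ^2*K^2/V) * n⁻¹ := by
        apply mul_le_mul_of_nonneg_left _ (by positivity)
        exact inv_anti₀ hn0 (by nlinarith [h1])
      rw [keq] at key
      exact key.trans k2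
    refine squeeze_zero_norm' hbnd ?_
    simpa using tendsto_inv_atTop_zero.const_mul (γ^2*K^2/V)
  -- limits of the upper and lower envelopes
  have hexp : Tendsto (fun n => Real.exp (-((g (n + Δ n))^2/2 - (g n)^2/2
      - Δ n * g n * deriv g n))) atTop (nhds 1) := by
    have hneg : Tendsto (fun n => -((g (n + Δ n))^2/2 - (g n)^2/2
        - Δ n * g n * deriv g n)) atTop (nhds 0) := by simpa using hT3.neg
    have := (Real.continuous_exp.tendsto 0).comp hneg
    simpa [Function.comp_def] using this
  have hb2top : Tendsto (fun n => (g n)^2) atTop atTop := by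
    simpa [pow_two] using hT2.atTop_mul_atTop₀ hT2
  have ha2top : Tendsto (fun n => (g (n + Δ n))^2) atTop atTop := by
    simpa [pow_two] using hTa.atTop_mul_atTop₀ hTa
  have hmidU : Tendsto (fun n => 1 + ((g n)^2)⁻¹) atTop (nhds 1) := by
    simpa using (tendsto_inv_atTop_zero.comp hb2top).const_add 1
  have hmidL : Tendsto (fun n => (1 + ((g (n + Δ n))^2)⁻¹)⁻¹) atTop (nhds 1) := by
    have h := ((tendsto_inv_atTop_zero.comp ha2top).const_add 1).inv₀ (by norm_num)
    simpa using h
  have hUlim : Tendsto (fun n => Real.exp (-((g (n + Δ n))^2/2 - (g n)^2/2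
      - Δ n * g n * deriv g n)) * (1 + ((g n)^2)⁻¹) * (g n / g (n + Δ n)))
      atTop (nhds 1) := by
    have := (hexp.mul hmidU).mul hT4
    simpa using this
  have hLlim : Tendsto (fun n => Real.exp (-((g (n + Δ n))^2/2 - (g n)^2/2
      - Δ n * g n * deriv g n)) * (1 + ((g (n + Δ n))^2)⁻¹)⁻¹ * (g n / g (n + Δ n)))
      atTop (nhds 1) := by
    have := (hexp.mul hmidL).mul hT4
    simpa using this
  -- final assembly
  have hgaussQ : ∀ x : ℝ, gaussQ x
      = (Real.sqrt (2*Real.pi))⁻¹ * ∫ t in Ioi x, Real.exp (-(t^2)/2) := by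
    intro x
    rw [gaussQ, integral_Ici_eq_integral_Ioi]
  have hc0 : (Real.sqrt (2*Real.pi))⁻¹ ≠ 0 := by
    have : (0:ℝ) < 2*Real.pi := by positivity
    positivity
  apply tendsto_of_tendsto_of_tendsto_of_le_of_le' hLlim hUlim
  · -- lower bound eventually
    filter_upwards [hEv] with n hn
    obtain ⟨⟨h1, hΔb⟩, hΔhalf, hb, ha, hnC⟩ := hn
    have hn0 : (0:ℝ) < n := lt_of_lt_of_le one_pos h1
    have hm0 : (0:ℝ) < n + Δ n := lt_of_lt_of_le (by linarith) hΔhalf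
    have ha0 : 0 < g (n + Δ n) := by
      rw [hg]; exact div_pos ha (Real.sqrt_pos.mpr (mul_pos hm0 hV))
    have hb0 : 0 < g n := by
      rw [hg]; exact div_pos hb (Real.sqrt_pos.mpr (mul_pos hn0 hV))
    set a := g (n + Δ n)
    set b := g n
    set E := Δ n * g n * deriv g n with hE_def
    set Ia := ∫ t in Ioi a, Real.exp (-(t^2)/2) with hIa_def
    set Ib := ∫ t in Ioi b, Real.exp (-(t^2)/2) with hIb_def
    have horig : (1 - F (n + Δ n)) / ((1 - F n) * Real.exp (-E))
        = Ia / (Ib * Real.exp (-E)) := by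
      rw [hF, hF, show (1 : ℝ) - (1 - gaussQ (g (n + Δ n))) = gaussQ (g (n + Δ n)) by ring,
        show (1 : ℝ) - (1 - gaussQ (g n)) = gaussQ (g n) by ring, hgaussQ, hgaussQ]
      rw [show ((Real.sqrt (2*Real.pi))⁻¹ * Ib) * Real.exp (-E)
          = (Real.sqrt (2*Real.pi))⁻¹ * (Ib * Real.exp (-E)) by ring]
      exact mul_div_mul_left _ _ hc0
    rw [horig]
    have hIa_lo : Real.exp (-(a^2)/2) * (a/(1+a^2)) ≤ Ia := mills_lower ha0
    have hIb_hi : Ib ≤ Real.exp (-(b^2)/2)/b := mills_upper hb0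
    have hIb_lo : 0 < Ib := lt_of_lt_of_le (by positivity) (mills_lower hb0)
    have e_pos : 0 < Real.exp (-E) := Real.exp_pos _
    have hq : (Real.exp (-(a^2)/2) * (a/(1+a^2))) / ((Real.exp (-(b^2)/2)/b) * Real.exp (-E))
        ≤ Ia / (Ib * Real.exp (-E)) := by
      apply div_le_div₀ (lt_of_lt_of_le (by positivity) hIa_lo).le hIa_lo
        (by positivity) (mul_le_mul_of_nonneg_right hIb_hi e_pos.le)
    refine le_trans (le_of_eq ?_) hq
    rw [show (-(a^2)/2 : ℝ) = -(a^2/2) by ring, show (-(b^2)/2 : ℝ) = -(b^2/2) by ring,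
      show (-E : ℝ) = -(E) by ring, Real.exp_neg (a^2/2), Real.exp_neg (b^2/2), Real.exp_neg E,
      show (-(a^2/2 - b^2/2 - E) : ℝ) = -(a^2/2 - b^2/2 - E) by ring,
      Real.exp_neg (a^2/2 - b^2/2 - E), Real.exp_sub, Real.exp_sub]
    have h1a : (0:ℝ) < 1 + a^2 := by positivity
    field_simp
    ring
  · -- upper bound eventually
    filter_upwards [hEv] with n hn
    obtain ⟨⟨h1, hΔb⟩, hΔhalf, hb, ha, hnC⟩ := hn
    have hn0 : (0:ℝ) < n := lt_of_lt_of_le one_pos h1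
    have hm0 : (0:ℝ) < n + Δ n := lt_of_lt_of_le (by linarith) hΔhalf
    have ha0 : 0 < g (n + Δ n) := by
      rw [hg]; exact div_pos ha (Real.sqrt_pos.mpr (mul_pos hm0 hV))
    have hb0 : 0 < g n := by
      rw [hg]; exact div_pos hb (Real.sqrt_pos.mpr (mul_pos hn0 hV))
    set a := g (n + Δ n)
    set b := g n
    set E := Δ n * g n * deriv g n with hE_def
    set Ia := ∫ t in Ioi a, Real.exp (-(t^2)/2) with hIa_def
    set Ib := ∫ t in Ioi b, Real.exp (-(t^2)/2) with hIb_def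
    have horig : (1 - F (n + Δ n)) / ((1 - F n) * Real.exp (-E))
        = Ia / (Ib * Real.exp (-E)) := by
      rw [hF, hF, show (1 : ℝ) - (1 - gaussQ (g (n + Δ n))) = gaussQ (g (n + Δ n)) by ring,
        show (1 : ℝ) - (1 - gaussQ (g n)) = gaussQ (g n) by ring, hgaussQ, hgaussQ]
      rw [show ((Real.sqrt (2*Real.pi))⁻¹ * Ib) * Real.exp (-E)
          = (Real.sqrt (2*Real.pi))⁻¹ * (Ib * Real.exp (-E)) by ring]
      exact mul_div_mul_left _ _ hc0
    rw [horig]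
    have hIa_hi : Ia ≤ Real.exp (-(a^2)/2)/a := mills_upper ha0
    have hIb_lo : Real.exp (-(b^2)/2) * (b/(1+b^2)) ≤ Ib := mills_lower hb0
    have e_pos : 0 < Real.exp (-E) := Real.exp_pos _
    have hq : Ia / (Ib * Real.exp (-E))
        ≤ (Real.exp (-(a^2)/2)/a) / ((Real.exp (-(b^2)/2) * (b/(1+b^2))) * Real.exp (-E)) := by
      apply div_le_div₀ (by positivity) hIa_hi (by positivity)
        (mul_le_mul_of_nonneg_right hIb_lo e_pos.le)
    refine le_trans hq (le_of_eq ?_)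
    rw [show (-(a^2)/2 : ℝ) = -(a^2/2) by ring, show (-(b^2)/2 : ℝ) = -(b^2/2) by ring,
      Real.exp_neg (a^2/2), Real.exp_neg (b^2/2), Real.exp_neg E,
      Real.exp_neg (a^2/2 - b^2/2 - E), Real.exp_sub, Real.exp_sub]
    have h1b : (0:ℝ) < 1 + b^2 := by positivity
    field_simp
    ring
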